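/- Let f : ℝ^m → ℝ be C¹ and suppose there are continuous functions L : ℝ^m → (0,∞) and r : ℝ^m → (0,∞) such that ‖∇f(x+v) − ∇f(x)‖ ≤ L(x)‖v‖ for all x ∈ ℝ^m and all v with ‖v‖ < r(x). Fix α, β ∈ (0,1) and δ₀ > 0, and let (x_n) be the local backtracking gradient descent sequence from any initial point x₀. Then for all n, f(x_n − δ̂(x_n)∇f(x_n)) − f(x_n) ≤ −(1−α) δ̂(x_n) ‖∇f(x_n)‖². -/

import Mathlib

open Gradient

/-- `δhat` is the local backtracking learning rate function associated with `f`, the local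
Lipschitz-constant function `L`, the radius function `r`, and parameters `α, β, δ₀`:
`δhat x` is the largest number of the form `β^j δ₀` (i.e. the one with the smallest
exponent `j`) satisfying both `δ < α / L x` and `δ ‖∇f(x)‖ < r x / 2`. -/
def IsLocalBacktrackingRate {E : Type*} [NormedAddCommGroup E] [InnerProductSpace ℝ E]
    [CompleteSpace E] (f : E → ℝ) (L r : E → ℝ) (α β δ₀ : ℝ) (δhat : E → ℝ) : Prop :=
  ∀ x : E, ∃ j : ℕ, δhat x = β ^ j * δ₀ ∧
    (δhat x < α / L x ∧ δhat x * ‖∇ f x‖ < r x / 2) ∧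
    ∀ i < j, ¬ (β ^ i * δ₀ < α / L x ∧ β ^ i * δ₀ * ‖∇ f x‖ < r x / 2)

theorem descent_key {m : ℕ} (f : EuclideanSpace ℝ (Fin m) → ℝ) (hf : ContDiff ℝ 1 f)
    (Ly ry : ℝ)
    (y v : EuclideanSpace ℝ (Fin m))
    (hlip : ∀ w : EuclideanSpace ℝ (Fin m), ‖w‖ < ry → ‖∇ f (y + w) - ∇ f y‖ ≤ Ly * ‖w‖)
    (hv : ‖v‖ < ry) :
    f (y + v) - f y ≤ inner ℝ (∇ f y) v + Ly * ‖v‖ ^ 2 / 2 := by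
  have hderiv : ∀ t : ℝ, HasDerivAt (fun t : ℝ => f (y + t • v))
      (inner ℝ (∇ f (y + t • v)) v : ℝ) t := by
    intro t
    have h1 : HasDerivAt (fun t : ℝ => y + t • v) v t := by
      simpa using ((hasDerivAt_id t).smul_const v).const_add y
    have h2 : HasGradientAt f (∇ f (y + t • v)) (y + t • v) :=
      (hf.differentiable one_ne_zero (y + t • v)).hasGradientAt
    exact (h2.hasFDerivAt.comp_hasDerivAt t h1).congr_deriv (by simp [InnerProductSpace.toDual])
  set ψ : ℝ → ℝ := fun t => Ly * ‖v‖ ^ 2 * t ^ 2 / 2 + (inner ℝ (∇ f y) v : ℝ) * t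
      - f (y + t • v) with hψ
  have hψderiv : ∀ t : ℝ, HasDerivAt ψ
      (Ly * ‖v‖ ^ 2 * t + (inner ℝ (∇ f y) v : ℝ) - inner ℝ (∇ f (y + t • v)) v) t := by
    intro t
    have hq : HasDerivAt (fun t : ℝ => Ly * ‖v‖ ^ 2 * t ^ 2 / 2 + (inner ℝ (∇ f y) v : ℝ) * t)
        (Ly * ‖v‖ ^ 2 * t + (inner ℝ (∇ f y) v : ℝ)) t := by
      have : HasDerivAt (fun t : ℝ => t ^ 2) (2 * t) t := by
        simpa using hasDerivAt_pow 2 t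
      have h1 := (this.const_mul (Ly * ‖v‖ ^ 2)).div_const 2
      have h2 := (hasDerivAt_id t).const_mul (inner ℝ (∇ f y) v : ℝ)
      exact (h1.add h2).congr_deriv (by ring)
    exact hq.sub (hderiv t)
  have hmono : MonotoneOn ψ (Set.Icc 0 1) := by
    apply monotoneOn_of_deriv_nonneg (convex_Icc 0 1)
    · exact Continuous.continuousOn (by
        have : Continuous ψ := by
          apply Continuous.sub
          · fun_prop
          · exact (hf.continuous).comp (by fun_prop)
        exact this)
    · intro t ht
      exact (hψderiv t).differentiableAt.differentiableWithinAt
    · intro t ht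
      rw [interior_Icc] at ht
      rw [(hψderiv t).deriv]
      have htv : ‖t • v‖ < ry := by
        rw [norm_smul, Real.norm_eq_abs, abs_of_pos ht.1]
        calc t * ‖v‖ ≤ 1 * ‖v‖ := by
              apply mul_le_mul_of_nonneg_right (le_of_lt ht.2) (norm_nonneg v)
          _ = ‖v‖ := one_mul _
          _ < ry := hv
      have hinner : (inner ℝ (∇ f (y + t • v)) v : ℝ) - inner ℝ (∇ f y) v
          ≤ Ly * (t * ‖v‖) * ‖v‖ := by
        have h1 : (inner ℝ (∇ f (y + t • v)) v : ℝ) - inner ℝ (∇ f y) v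
            = inner ℝ (∇ f (y + t • v) - ∇ f y) v := by
          rw [inner_sub_left]
        rw [h1]
        calc (inner ℝ (∇ f (y + t • v) - ∇ f y) v : ℝ)
            ≤ ‖∇ f (y + t • v) - ∇ f y‖ * ‖v‖ := real_inner_le_norm _ _
          _ ≤ Ly * ‖t • v‖ * ‖v‖ := by
              apply mul_le_mul_of_nonneg_right (hlip _ htv) (norm_nonneg v)
          _ = Ly * (t * ‖v‖) * ‖v‖ := by
              rw [norm_smul, Real.norm_eq_abs, abs_of_pos ht.1]
      nlinarith [norm_nonneg v]
  have h01 : ψ 0 ≤ ψ 1 := hmono (by norm_num) (by norm_num) zero_le_one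
  simp only [hψ, zero_smul, add_zero, one_smul, one_pow, mul_one, mul_zero, zero_pow,
    zero_div, add_zero, zero_add] at h01
  norm_num [-PiLp.inner_apply, -inner_gradient_left] at h01
  linarith [h01]


/-- Let `f : ℝ^m → ℝ` be `C¹` with continuous functions
`L, r : ℝ^m → (0,∞)` such that `‖∇f(x+v) − ∇f(x)‖ ≤ L(x)‖v‖` whenever `‖v‖ < r(x)`. Then the
local backtracking gradient descent sequence satisfies the descent estimate
`f(x_n − δ̂(x_n)∇f(x_n)) − f(x_n) ≤ −(1−α) δ̂(x_n) ‖∇f(x_n)‖²` for all `n`. -/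
theorem local_backtracking_GD_descent
    {m : ℕ} (f : EuclideanSpace ℝ (Fin m) → ℝ) (hf : ContDiff ℝ 1 f)
    (L r : EuclideanSpace ℝ (Fin m) → ℝ) (hLcont : Continuous L) (hrcont : Continuous r)
    (hLpos : ∀ x, 0 < L x) (hrpos : ∀ x, 0 < r x)
    (hlip : ∀ x v, ‖v‖ < r x → ‖∇ f (x + v) - ∇ f x‖ ≤ L x * ‖v‖)
    (α β δ₀ : ℝ) (hα0 : 0 < α) (hα1 : α < 1) (hβ0 : 0 < β) (hβ1 : β < 1) (hδ₀ : 0 < δ₀)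
    (δhat : EuclideanSpace ℝ (Fin m) → ℝ)
    (hδhat : IsLocalBacktrackingRate f L r α β δ₀ δhat)
    (x : ℕ → EuclideanSpace ℝ (Fin m))
    (hupd : ∀ n, x (n + 1) = x n - δhat (x n) • ∇ f (x n)) :
    ∀ n, f (x n - δhat (x n) • ∇ f (x n)) - f (x n) ≤
      -((1 - α) * δhat (x n) * ‖∇ f (x n)‖ ^ 2) := by
  intro n
  set y := x n
  set δ := δhat y with hδ
  obtain ⟨j, hj, ⟨hδL, hδr⟩, -⟩ := hδhat y
  have hδpos : 0 < δ := by rw [hδ, hj]; positivity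
  set g := ∇ f y with hg
  set v : EuclideanSpace ℝ (Fin m) := -(δ • g) with hvdef
  have hnv : ‖v‖ = δ * ‖g‖ := by
    rw [hvdef, norm_neg, norm_smul, Real.norm_eq_abs, abs_of_pos hδpos]
  have hvr : ‖v‖ < r y := by
    rw [hnv]
    calc δ * ‖g‖ < r y / 2 := hδr
      _ < r y := by linarith [hrpos y]
  have key := descent_key f hf (L y) (r y) y v (fun w hw => hlip y w hw) hvr
  have hin : (inner ℝ g v : ℝ) = -(δ * ‖g‖ ^ 2) := by
    rw [hvdef, inner_neg_right, real_inner_smul_right, real_inner_self_eq_norm_sq]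
  have hLδ : δ * L y < α := (lt_div_iff₀ (hLpos y)).mp hδL
  have hyv : y - δ • g = y + v := by rw [hvdef, sub_eq_add_neg]
  rw [hin, hnv] at key
  rw [hyv]
  nlinarith [sq_nonneg ‖g‖, norm_nonneg g, key, hLδ, hδpos]
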